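/- Let R > 0 and let π ≥ β ≥ γ ≥ δ ≥ 0. Set A = (−R, 0), B = P_R(β), C = P_R(γ), D = P_R(δ), E = (R, 0), so that ABCDE is a pentagon inscribed in the upper semicircle with the side AE as diameter of length 2R. Writing a = dist A B, b = dist B C, c = dist C D, d = dist D E for the sides and x = dist A C, y = dist C E for the diagonals from C, one has 4R² = a² + b² + c² + d² + (a·b·y + x·c·d)/R. -/

import Mathlib

noncomputable def P (R θ : ℝ) : EuclideanSpace ℝ (Fin 2) :=
  (WithLp.equiv 2 (Fin 2 → ℝ)).symm ![R * Real.cos θ, R * Real.sin θ]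

lemma dist_P (R α θ : ℝ) (hR : 0 ≤ R) (h1 : θ ≤ α) (h2 : α - θ ≤ 2 * Real.pi) :
    dist (P R α) (P R θ) = 2 * R * Real.sin ((α - θ) / 2) := by
  have hs : 0 ≤ Real.sin ((α - θ) / 2) := by
    apply Real.sin_nonneg_of_nonneg_of_le_pi <;> linarith
  have hcos : Real.cos (α - θ) = 1 - 2 * Real.sin ((α - θ) / 2) ^ 2 := by
    have h := Real.cos_two_mul ((α - θ) / 2)
    rw [show 2 * ((α - θ) / 2) = α - θ by ring] at h
    have := Real.sin_sq_add_cos_sq ((α - θ) / 2); linarith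
  have hkey : (R * Real.cos α - R * Real.cos θ) ^ 2 +
      (R * Real.sin α - R * Real.sin θ) ^ 2 =
      (2 * R * Real.sin ((α - θ) / 2)) ^ 2 := by
    have h2' := Real.cos_sub α θ
    have hα := Real.sin_sq_add_cos_sq α
    have hθ := Real.sin_sq_add_cos_sq θ
    linear_combination R ^ 2 * hα + R ^ 2 * hθ + 2 * R ^ 2 * h2' - 2 * R ^ 2 * hcos
  rw [EuclideanSpace.dist_eq]
  rw [show (2 * R * Real.sin ((α - θ) / 2)) = Real.sqrt ((2 * R * Real.sin ((α - θ) / 2)) ^ 2) from (Real.sqrt_sq (by positivity)).symm]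
  congr 1
  rw [Fin.sum_univ_two, ← hkey]
  simp [P, Real.dist_eq]

theorem pentagon_pythagoras (R β γ δ : ℝ) (hR : 0 < R)
    (hδ : 0 ≤ δ) (hγδ : δ ≤ γ) (hβγ : γ ≤ β) (hβ : β ≤ Real.pi)
    (A B C D E : EuclideanSpace ℝ (Fin 2))
    (hA : A = P R Real.pi) (hB : B = P R β) (hC : C = P R γ)
    (hD : D = P R δ) (hE : E = P R 0)
    (a b c d x y : ℝ)
    (ha : a = dist A B) (hb : b = dist B C) (hc : c = dist C D) (hd : d = dist D E)
    (hx : x = dist A C) (hy : y = dist C E) :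
    4 * R ^ 2 = a ^ 2 + b ^ 2 + c ^ 2 + d ^ 2 + (a * b * y + x * c * d) / R := by
  have pi_pos := Real.pi_pos
  have ha' : a = 2 * R * Real.sin ((Real.pi - β) / 2) := by
    rw [ha, hA, hB, dist_P R Real.pi β hR.le (by linarith) (by linarith)]
  have hb' : b = 2 * R * Real.sin ((β - γ) / 2) := by
    rw [hb, hB, hC, dist_P R β γ hR.le (by linarith) (by linarith)]
  have hc' : c = 2 * R * Real.sin ((γ - δ) / 2) := by
    rw [hc, hC, hD, dist_P R γ δ hR.le (by linarith) (by linarith)]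
  have hd' : d = 2 * R * Real.sin (δ / 2) := by
    rw [hd, hD, hE, dist_P R δ 0 hR.le (by linarith) (by linarith)]
    ring_nf
  have hx' : x = 2 * R * Real.sin ((Real.pi - γ) / 2) := by
    rw [hx, hA, hC, dist_P R Real.pi γ hR.le (by linarith) (by linarith)]
  have hy' : y = 2 * R * Real.sin (γ / 2) := by
    rw [hy, hC, hE, dist_P R γ 0 hR.le (by linarith) (by linarith)]
    ring_nf
  have e1 : Real.sin ((Real.pi - β) / 2) = Real.cos (β / 2) := by
    rw [show (Real.pi - β) / 2 = Real.pi / 2 - β / 2 by ring, Real.sin_pi_div_two_sub]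
  have e2 : Real.sin ((Real.pi - γ) / 2) = Real.cos (γ / 2) := by
    rw [show (Real.pi - γ) / 2 = Real.pi / 2 - γ / 2 by ring, Real.sin_pi_div_two_sub]
  have e3 : Real.sin ((β - γ) / 2) =
      Real.sin (β / 2) * Real.cos (γ / 2) - Real.cos (β / 2) * Real.sin (γ / 2) := by
    rw [show (β - γ) / 2 = β / 2 - γ / 2 by ring, Real.sin_sub]
  have e4 : Real.sin ((γ - δ) / 2) =
      Real.sin (γ / 2) * Real.cos (δ / 2) - Real.cos (γ / 2) * Real.sin (δ / 2) := by
    rw [show (γ - δ) / 2 = γ / 2 - δ / 2 by ring, Real.sin_sub]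
  rw [ha', hb', hc', hd', hx', hy', e1, e2, e3, e4]
  have pβ := Real.sin_sq_add_cos_sq (β / 2)
  have pγ := Real.sin_sq_add_cos_sq (γ / 2)
  have pδ := Real.sin_sq_add_cos_sq (δ / 2)
  have hR' : R ≠ 0 := hR.ne'
  field_simp
  linear_combination (-4 * Real.cos (γ / 2) ^ 2) * pβ +
    (4 * (Real.cos (β / 2) ^ 2 + Real.sin (δ / 2) ^ 2 - 1)) * pγ +
    (-4 * Real.sin (γ / 2) ^ 2) * pδ
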